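/- Let G be a directed graph containing directed paths P' and P. Suppose u and u' are vertices of P' such that first_G(u,P) and first_G(u',P) both exist and are distinct vertices of P. Then every walk in G from u to first_G(u,P) is vertex-disjoint from every walk in G from u' to first_G(u',P). -/

import Mathlib

/-- A walk in the directed graph with edge relation `E`: a nonempty list of vertices
starting at `u`, ending at `v`, with every consecutive pair an edge. -/
def IsWalk {V : Type*} (E : V → V → Prop) (l : List V) (u v : V) : Prop :=
  l ≠ [] ∧ l.head? = some u ∧ l.getLast? = some v ∧ l.Chain' E

/-- `v` is reachable from `u` in the graph with edge relation `E`. -/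
def Reach {V : Type*} (E : V → V → Prop) (u v : V) : Prop :=
  ∃ l : List V, IsWalk E l u v

/-- `b` is the `≤_P`-least vertex of the directed path (list) `p` reachable from `s`. -/
def IsFirst {V : Type*} [DecidableEq V] (E : V → V → Prop) (s : V) (p : List V)
    (b : V) : Prop :=
  b ∈ p ∧ Reach E s b ∧ ∀ c ∈ p, Reach E s c → p.idxOf b ≤ p.idxOf c

private lemma walk_mem_reach {V : Type*} {E : V → V → Prop} :
    ∀ {l : List V} {u v x : V}, IsWalk E l u v → x ∈ l →
      Relation.ReflTransGen E u x ∧ Relation.ReflTransGen E x v := by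
  intro l
  induction l with
  | nil => intro u v x h hx; exact absurd rfl h.1
  | cons a rest ih =>
    intro u v x h hx
    obtain ⟨-, hh, hg, hc⟩ := h
    simp only [List.head?_cons, Option.some.injEq] at hh
    subst hh
    rcases rest with _ | ⟨b, rest'⟩
    · simp at hg hx
      subst hg; subst hx
      exact ⟨.refl, .refl⟩
    · simp only [List.Chain', List.isChain_cons_cons] at hc
      have hwalk : IsWalk E (b :: rest') b v :=
        ⟨by simp, rfl, by simpa [List.getLast?_cons_cons] using hg, hc.2⟩
      rcases List.mem_cons.mp hx with rfl | hx'
      · have := (ih hwalk (List.mem_cons_self (a := b) (l := rest'))).2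
        exact ⟨.refl, .head hc.1 this⟩
      · have := ih hwalk hx'
        exact ⟨.head hc.1 this.1, this.2⟩

private lemma reach_of_rtg {V : Type*} {E : V → V → Prop} {u v : V}
    (h : Relation.ReflTransGen E u v) : Reach E u v := by
  induction h with
  | refl => exact ⟨[u], by simp, rfl, rfl, List.isChain_singleton _⟩
  | @tail b c _ e ih =>
    obtain ⟨m, hm, hh, hg, hc⟩ := ih
    refine ⟨m ++ [c], by simp, by rwa [List.head?_append_of_ne_nil _ hm], by simp, ?_⟩
    simp only [List.Chain', List.isChain_append]
    refine ⟨hc, List.isChain_singleton _, ?_⟩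
    intro a ha b hb
    rw [hg] at ha
    simp only [Option.mem_def, Option.some.injEq, List.head?_cons] at ha hb
    subst ha; subst hb
    exact e

/-- If `u, u'` are vertices of `P'` whose firsts on `P` exist and are
distinct, then every walk from `u` to `first_G(u,P)` is vertex-disjoint from every walk
from `u'` to `first_G(u',P)`. -/
theorem stmt_4 {V : Type*} [Fintype V] [DecidableEq V] (E : V → V → Prop)
    (p' p : List V) (hp'nd : p'.Nodup) (hp'ch : p'.Chain' E)
    (hpnd : p.Nodup) (hpch : p.Chain' E)
    (u u' fu fu' : V) (hu : u ∈ p') (hu' : u' ∈ p')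
    (h1 : IsFirst E u p fu) (h2 : IsFirst E u' p fu') (hne : fu ≠ fu')
    (l l' : List V) (hl : IsWalk E l u fu) (hl' : IsWalk E l' u' fu') :
    ∀ x ∈ l, x ∉ l' := by
  intro x hx hx'
  have hux : Relation.ReflTransGen E u x := (walk_mem_reach hl hx).1
  have hxf' : Relation.ReflTransGen E x fu' := (walk_mem_reach hl' hx').2
  have hu'x : Relation.ReflTransGen E u' x := (walk_mem_reach hl' hx').1
  have hxf : Relation.ReflTransGen E x fu := (walk_mem_reach hl hx).2
  have r1 : Reach E u fu' := reach_of_rtg (hux.trans hxf')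
  have r2 : Reach E u' fu := reach_of_rtg (hu'x.trans hxf)
  have i1 := h1.2.2 fu' h2.1 r1
  have i2 := h2.2.2 fu h1.1 r2
  exact hne ((List.idxOf_inj h1.1).mp (le_antisymm i1 i2))
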